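/- Let E be a number field, A a finite-dimensional semisimple E-algebra, 𝒜 an O_E-order of full rank in A, and ℳ a maximal O_E-order in A containing 𝒜. Let X be an 𝒜-lattice (a left 𝒜-module finitely generated and torsion-free over O_E). Then X is free of rank d over 𝒜 if and only if (a) X is locally free of rank d over 𝒜 (i.e., X_𝔭 is free of rank d over 𝒜_𝔭 for every nonzero prime 𝔭 of O_E), and (b) there exist α₁,…,α_d ∈ X such that ℳX = ℳα₁ ⊕ … ⊕ ℳα_d. Moreover, when (a) and (b) hold, X = 𝒜α₁ ⊕ … ⊕ 𝒜α_d. -/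

import Mathlib

open scoped NumberField

section

variable (E : Type*) [Field E] [NumberField E]
variable (A : Type*) [Ring A] [Algebra E A]

/-- The ring of integers of `E` acts on any `E`-algebra `A`. -/
noncomputable instance algebraOEA : Algebra (𝓞 E) A :=
  RingHom.toAlgebra' ((algebraMap E A).comp (algebraMap (𝓞 E) E))
    (fun c x => by
      simpa only [RingHom.comp_apply] using (Algebra.commutes (algebraMap (𝓞 E) E c) x))

variable (V : Type*) [AddCommGroup V] [Module E V] [Module A V] [IsScalarTower E A V]

/-- The ring of integers of `E` acts on any `E`-vector space. -/
noncomputable instance (priority := 50) moduleOEV {E : Type*} [Field E] [NumberField E]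
    (W : Type*) [AddCommGroup W] [Module E W] : Module (𝓞 E) W :=
  Module.compHom W (algebraMap (𝓞 E) E)

variable {E A V}

/-- An `𝓞 E`-order of full rank in `A`: a subalgebra which is a finitely generated
`𝓞 E`-module spanning `A` over `E`. -/
def IsOrder (𝒜 : Subalgebra (𝓞 E) A) : Prop :=
  (Subalgebra.toSubmodule 𝒜).FG ∧ Submodule.span E (𝒜 : Set A) = ⊤

/-- A maximal `𝓞 E`-order in `A`. -/
def IsMaximalOrder (ℳ : Subalgebra (𝓞 E) A) : Prop :=
  IsOrder ℳ ∧ ∀ ℳ' : Subalgebra (𝓞 E) A, IsOrder ℳ' → ℳ ≤ ℳ' → ℳ' = ℳ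

/-- An `𝒜`-lattice: an `𝓞 E`-submodule of an `A`-module `V` which is finitely generated
and torsion-free over `𝓞 E` and stable under the order `𝒜`. -/
def IsALattice (𝒜 : Subalgebra (𝓞 E) A) (X : Submodule (𝓞 E) V) : Prop :=
  X.FG ∧ (∀ (r : 𝓞 E) (x : V), x ∈ X → r • x = 0 → r = 0 ∨ x = 0) ∧
    ∀ a ∈ 𝒜, ∀ x ∈ X, a • x ∈ X

/-- `α : Fin d → V` is a free basis of the set `Y ⊆ V` over the set of scalars `S ⊆ A`,
i.e. `Y = S•α 1 ⊕ ⋯ ⊕ S•α d` with the summands free. -/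
def IsBasisOf {d : ℕ} (S : Set A) (Y : Set V) (α : Fin d → V) : Prop :=
  (∀ lam : Fin d → A, (∀ i, lam i ∈ S) → ∑ i, lam i • α i ∈ Y) ∧
  (∀ y ∈ Y, ∃ lam : Fin d → A, (∀ i, lam i ∈ S) ∧ y = ∑ i, lam i • α i) ∧
  (∀ lam : Fin d → A, (∀ i, lam i ∈ S) → ∑ i, lam i • α i = 0 → ∀ i, lam i = 0)

/-- `Y` is a free module of rank `d` over the set of scalars `S ⊆ A`. -/
def IsFreeOfRank (S : Set A) (Y : Set V) (d : ℕ) : Prop :=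
  ∃ α : Fin d → V, (∀ i, α i ∈ Y) ∧ IsBasisOf S Y α

/-- Localization at the prime `𝔭` of a subset of `A`, inside `A`. -/
def localizeA (𝔭 : Ideal (𝓞 E)) (S : Set A) : Set A :=
  {a | ∃ s : 𝓞 E, s ∉ 𝔭 ∧ s • a ∈ S}

/-- Localization at the prime `𝔭` of a subset of `V`, inside `V`. -/
def localizeV (𝔭 : Ideal (𝓞 E)) (Y : Set V) : Set V :=
  {v | ∃ s : 𝓞 E, s ∉ 𝔭 ∧ s • v ∈ Y}

/-- `Y` is locally free of rank `d` over the order (given as the set `S`): at every nonzero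
prime `𝔭` of `𝓞 E` the localization `Y_𝔭` is free of rank `d` over `S_𝔭`. -/
def IsLocallyFreeOfRank (S : Set A) (Y : Set V) (d : ℕ) : Prop :=
  ∀ 𝔭 : Ideal (𝓞 E), 𝔭.IsPrime → 𝔭 ≠ ⊥ →
    IsFreeOfRank (localizeA 𝔭 S) (localizeV 𝔭 Y) d

/-- The `S`-span `S·Y` of a subset `Y ⊆ V`, for a set of scalars `S ⊆ A`:
all finite sums `∑ λᵢ • xᵢ` with `λᵢ ∈ S`, `xᵢ ∈ Y`. -/
def spanSet (S : Set A) (Y : Set V) : Set V :=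
  {v | ∃ (m : ℕ) (lam : Fin m → A) (x : Fin m → V),
    (∀ i, lam i ∈ S) ∧ (∀ i, x i ∈ Y) ∧ v = ∑ i, lam i • x i}

set_option linter.unusedSectionVars false
section Helpers

variable {E : Type*} [Field E] [NumberField E]
variable {A : Type*} [Ring A] [Algebra E A]
variable {V : Type*} [AddCommGroup V] [Module E V] [Module A V] [IsScalarTower E A V]

lemma oeV_smul_def (r : 𝓞 E) (v : V) : r • v = (algebraMap (𝓞 E) E r) • v := rfl

lemma oeA_algebraMap_eq (r : 𝓞 E) :
    algebraMap (𝓞 E) A r = algebraMap E A (algebraMap (𝓞 E) E r) := rfl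

lemma mapOE_smul_V (r : 𝓞 E) (w : V) : (algebraMap (𝓞 E) A r) • w = r • w := by
  rw [oeA_algebraMap_eq, algebraMap_smul, oeV_smul_def]

lemma oeA_smul_def (r : 𝓞 E) (a : A) : r • a = algebraMap (𝓞 E) A r * a :=
  Algebra.smul_def r a

lemma smul_smul_V (r : 𝓞 E) (a : A) (v : V) : (r • a) • v = r • (a • v) := by
  rw [oeA_smul_def, mul_smul, mapOE_smul_V]

lemma smul_smul_V' (r : 𝓞 E) (a : A) (v : V) : a • (r • v) = r • (a • v) := by
  rw [← mapOE_smul_V (A := A) r v, ← mul_smul, ← Algebra.commutes r a, mul_smul, mapOE_smul_V]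

lemma oe_eq_zero_cancel {r : 𝓞 E} (hr : r ≠ 0) {a : A} (h : r • a = 0) : a = 0 := by
  have he : (algebraMap (𝓞 E) E r) ≠ 0 := by
    exact (map_ne_zero_iff _ (@IsFractionRing.injective (𝓞 E) _ E _
      (NumberField.RingOfIntegers.instAlgebra_1 E) _)).mpr hr
  have key : algebraMap E A (algebraMap (𝓞 E) E r)⁻¹ * algebraMap (𝓞 E) A r = 1 := by
    rw [show algebraMap (𝓞 E) A r = algebraMap E A (algebraMap (𝓞 E) E r) from rfl,
      ← map_mul, inv_mul_cancel₀ he, map_one]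
  have : algebraMap E A (algebraMap (𝓞 E) E r)⁻¹ * (r • a) = a := by
    rw [oeA_smul_def, ← mul_assoc, key, one_mul]
  rw [h, mul_zero] at this; exact this.symm

lemma oeV_eq_zero_cancel {r : 𝓞 E} (hr : r ≠ 0) {v : V} (h : r • v = 0) : v = 0 := by
  have he : (algebraMap (𝓞 E) E r) ≠ 0 := by
    exact (map_ne_zero_iff _ (@IsFractionRing.injective (𝓞 E) _ E _
      (NumberField.RingOfIntegers.instAlgebra_1 E) _)).mpr hr
  have : (algebraMap (𝓞 E) E r)⁻¹ • (r • v) = v := by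
    rw [oeV_smul_def, ← mul_smul, inv_mul_cancel₀ he, one_smul]
  rw [h, smul_zero] at this; exact this.symm

end Helpers
section Helpers2

variable {E : Type*} [Field E] [NumberField E]
variable {A : Type*} [Ring A] [Algebra E A]
variable {V : Type*} [AddCommGroup V] [Module E V] [Module A V] [IsScalarTower E A V]
variable {𝔭 : Ideal (𝓞 E)} (hp : 𝔭.IsPrime) {S : Subalgebra (𝓞 E) A}
include hp

lemma one_not_mem_p : (1 : 𝓞 E) ∉ 𝔭 := by
  intro h; exact hp.ne_top ((Ideal.eq_top_iff_one 𝔭).mpr h)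

lemma mem_localizeA_self {a : A} (ha : a ∈ S) : a ∈ localizeA 𝔭 (S : Set A) :=
  ⟨1, one_not_mem_p hp, by simpa using ha⟩

lemma localizeA_absorb {u : 𝓞 E} (hu : u ∉ 𝔭) {a : A}
    (h : u • a ∈ localizeA 𝔭 (S : Set A)) : a ∈ localizeA 𝔭 (S : Set A) := by
  obtain ⟨s, hs, hsa⟩ := h
  exact ⟨s * u, fun hmem => (hp.mem_or_mem hmem).elim hs hu, by rwa [mul_smul]⟩

lemma localizeA_smul (r : 𝓞 E) {a : A} (h : a ∈ localizeA 𝔭 (S : Set A)) :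
    r • a ∈ localizeA 𝔭 (S : Set A) := by
  obtain ⟨s, hs, hsa⟩ := h
  exact ⟨s, hs, by rw [smul_comm]; exact S.smul_mem hsa r⟩

lemma localizeA_add {a b : A} (ha : a ∈ localizeA 𝔭 (S : Set A))
    (hb : b ∈ localizeA 𝔭 (S : Set A)) : a + b ∈ localizeA 𝔭 (S : Set A) := by
  obtain ⟨s, hs, hsa⟩ := ha; obtain ⟨t, ht, htb⟩ := hb
  refine ⟨s * t, fun hmem => (hp.mem_or_mem hmem).elim hs ht, ?_⟩
  rw [smul_add]
  refine add_mem ?_ ?_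
  · rw [mul_comm, mul_smul]; exact S.smul_mem hsa t
  · rw [mul_smul]; exact S.smul_mem htb s

omit hp in
lemma localizeA_neg {a : A} (ha : a ∈ localizeA 𝔭 (S : Set A)) :
    -a ∈ localizeA 𝔭 (S : Set A) := by
  obtain ⟨s, hs, hsa⟩ := ha
  exact ⟨s, hs, by rw [smul_neg]; exact neg_mem hsa⟩

lemma localizeA_sub {a b : A} (ha : a ∈ localizeA 𝔭 (S : Set A))
    (hb : b ∈ localizeA 𝔭 (S : Set A)) : a - b ∈ localizeA 𝔭 (S : Set A) := by
  rw [sub_eq_add_neg]; exact localizeA_add hp ha (localizeA_neg hb)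

lemma localizeA_mul {a b : A} (ha : a ∈ localizeA 𝔭 (S : Set A))
    (hb : b ∈ localizeA 𝔭 (S : Set A)) : a * b ∈ localizeA 𝔭 (S : Set A) := by
  obtain ⟨s, hs, hsa⟩ := ha; obtain ⟨t, ht, htb⟩ := hb
  refine ⟨s * t, fun hmem => (hp.mem_or_mem hmem).elim hs ht, ?_⟩
  have : (s * t) • (a * b) = (s • a) * (t • b) := by
    rw [smul_mul_assoc, mul_smul_comm, mul_smul, smul_comm]
  rw [this]; exact mul_mem hsa htb

lemma localizeA_zero : (0 : A) ∈ localizeA 𝔭 (S : Set A) :=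
  mem_localizeA_self hp (zero_mem S)

lemma localizeA_one : (1 : A) ∈ localizeA 𝔭 (S : Set A) :=
  mem_localizeA_self hp (one_mem S)

lemma localizeA_sum {ι : Type*} (s : Finset ι) (f : ι → A)
    (h : ∀ i ∈ s, f i ∈ localizeA 𝔭 (S : Set A)) :
    ∑ i ∈ s, f i ∈ localizeA 𝔭 (S : Set A) := by
  classical
  induction s using Finset.induction_on with
  | empty => simpa using localizeA_zero hp
  | insert _ _ hns ih =>
    rw [Finset.sum_insert hns]
    exact localizeA_add hp (h _ (Finset.mem_insert_self _ _))
      (ih fun i hi => h i (Finset.mem_insert_of_mem hi))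

omit hp in
lemma localizeA_mono {S' : Subalgebra (𝓞 E) A} (hSS' : S ≤ S') {a : A}
    (h : a ∈ localizeA 𝔭 (S : Set A)) : a ∈ localizeA 𝔭 (S' : Set A) := by
  obtain ⟨s, hs, hsa⟩ := h; exact ⟨s, hs, hSS' hsa⟩

lemma mem_localizeV_self {Y : Set V} {v : V} (hv : v ∈ Y) : v ∈ localizeV 𝔭 Y :=
  ⟨1, one_not_mem_p hp, by simpa using hv⟩

omit hp in
lemma localizeV_mono {Y Y' : Set V} (hYY' : Y ⊆ Y') {v : V}
    (h : v ∈ localizeV 𝔭 Y) : v ∈ localizeV 𝔭 Y' := by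
  obtain ⟨s, hs, hsv⟩ := h; exact ⟨s, hs, hYY' hsv⟩

end Helpers2
section Helpers3

variable {E : Type*} [Field E] [NumberField E]
variable {A : Type*} [Ring A] [Algebra E A]
variable {V : Type*} [AddCommGroup V] [Module E V] [Module A V] [IsScalarTower E A V]

lemma oeA_smul_via_E (r : 𝓞 E) (a : A) : r • a = (algebraMap (𝓞 E) E r) • a := by
  rw [oeA_smul_def, oeA_algebraMap_eq, ← Algebra.smul_def]

/-- Clearing denominators: an element of the `E`-span of an order has a multiple in it. -/
lemma exists_denom_of_mem_spanE {S : Subalgebra (𝓞 E) A} {a : A}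
    (ha : a ∈ Submodule.span E (S : Set A)) :
    ∃ r : 𝓞 E, r ≠ 0 ∧ r • a ∈ S := by
  induction ha using Submodule.span_induction with
  | mem x hx => exact ⟨1, one_ne_zero, by simpa using hx⟩
  | zero => exact ⟨1, one_ne_zero, by simpa using zero_mem S⟩
  | add x y _ _ hx hy =>
    obtain ⟨r, hr0, hr⟩ := hx; obtain ⟨t, ht0, ht⟩ := hy
    refine ⟨r * t, mul_ne_zero hr0 ht0, ?_⟩
    rw [smul_add]
    refine add_mem ?_ ?_
    · rw [mul_comm, mul_smul]; exact S.smul_mem hr t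
    · rw [mul_smul]; exact S.smul_mem ht r
  | smul e x _ hx =>
    obtain ⟨r, hr0, hr⟩ := hx
    obtain ⟨q, p, hq⟩ := @IsLocalization.exists_integer_multiple (𝓞 E) _
      (nonZeroDivisors (𝓞 E)) E _ (NumberField.RingOfIntegers.instAlgebra_1 E) _ e
    refine ⟨q * r, mul_ne_zero (nonZeroDivisors.coe_ne_zero q) hr0, ?_⟩
    have key : (q : 𝓞 E) • (e • x) = p • x := by
      rw [oeA_smul_via_E, smul_smul, oeA_smul_via_E p x]
      congr 1
      exact (hq.trans (Algebra.smul_def _ _)).symm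
    rw [mul_smul, smul_comm, key, smul_comm]
    exact S.smul_mem hr p

/-- A common denominator for a finite family in a localized order. -/
lemma tuple_denom_A {𝔭 : Ideal (𝓞 E)} (hp : 𝔭.IsPrime) {S : Subalgebra (𝓞 E) A}
    {ι : Type*} [Fintype ι] {lam : ι → A} (h : ∀ i, lam i ∈ localizeA 𝔭 (S : Set A)) :
    ∃ s : 𝓞 E, s ∉ 𝔭 ∧ ∀ i, s • lam i ∈ S := by
  classical
  choose s hs hmem using h
  refine ⟨∏ i, s i, ?_, ?_⟩
  · exact Finset.prod_induction s (· ∉ 𝔭)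
      (fun x y hx hy hxy => (hp.mem_or_mem hxy).elim hx hy)
      (one_not_mem_p hp) (fun i _ => hs i)
  · intro i
    rw [← Finset.prod_erase_mul Finset.univ s (Finset.mem_univ i), mul_smul]
    exact S.smul_mem (hmem i) _

/-- A common denominator for a finite family in a localized lattice. -/
lemma tuple_denom_V {𝔭 : Ideal (𝓞 E)} (hp : 𝔭.IsPrime) {X : Submodule (𝓞 E) V}
    {ι : Type*} [Fintype ι] {v : ι → V} (h : ∀ i, v i ∈ localizeV 𝔭 (X : Set V)) :
    ∃ s : 𝓞 E, s ∉ 𝔭 ∧ ∀ i, s • v i ∈ X := by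
  classical
  choose s hs hmem using h
  refine ⟨∏ i, s i, ?_, ?_⟩
  · exact Finset.prod_induction s (· ∉ 𝔭)
      (fun x y hx hy hxy => (hp.mem_or_mem hxy).elim hx hy)
      (one_not_mem_p hp) (fun i _ => hs i)
  · intro i
    rw [← Finset.prod_erase_mul Finset.univ s (Finset.mem_univ i), mul_smul]
    exact X.smul_mem _ (hmem i)

/-- The conductor-type element: a nonzero `r` with `r • ℳ ⊆ 𝒜`. -/
lemma exists_conductor {𝒜 ℳ : Subalgebra (𝓞 E) A} (h𝒜 : IsOrder 𝒜)
    (hM : (Subalgebra.toSubmodule ℳ).FG) :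
    ∃ r : 𝓞 E, r ≠ 0 ∧ ∀ m ∈ ℳ, r • m ∈ 𝒜 := by
  classical
  obtain ⟨T, hT⟩ := hM
  have hTspan : ∀ t : {x // x ∈ T}, (t : A) ∈ Submodule.span E (𝒜 : Set A) := by
    intro t; rw [h𝒜.2]; exact Submodule.mem_top
  choose ρ hρ0 hρmem using fun t => exists_denom_of_mem_spanE (hTspan t)
  refine ⟨∏ t ∈ T.attach, ρ t, Finset.prod_ne_zero_iff.mpr fun t _ => hρ0 t, ?_⟩
  set r := ∏ t ∈ T.attach, ρ t with hr
  let N : Submodule (𝓞 E) A :=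
    { carrier := {a | r • a ∈ 𝒜}
      add_mem' := fun ha hb => by simpa [smul_add] using add_mem ha hb
      zero_mem' := by simpa using zero_mem 𝒜
      smul_mem' := fun c a ha => by
        simpa [smul_comm r c] using 𝒜.smul_mem ha c }
  have hTN : (T : Set A) ⊆ N := by
    intro t ht
    show r • t ∈ 𝒜
    rw [hr, ← Finset.prod_erase_mul T.attach ρ (Finset.mem_attach T ⟨t, ht⟩), mul_smul]
    exact 𝒜.smul_mem (hρmem ⟨t, ht⟩) _
  intro m hm
  have : m ∈ Submodule.span (𝓞 E) (T : Set A) := hT ▸ hm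
  exact (Submodule.span_le.mpr hTN) this

/-- An element lying in every localization of an order lies in the order. -/
lemma mem_of_mem_all_localizations {𝒜 : Subalgebra (𝓞 E) A} {a : A}
    (h : ∀ 𝔭 : Ideal (𝓞 E), 𝔭.IsPrime → 𝔭 ≠ ⊥ → a ∈ localizeA 𝔭 (𝒜 : Set A)) :
    a ∈ 𝒜 := by
  let I : Ideal (𝓞 E) :=
    { carrier := {s | s • a ∈ 𝒜}
      add_mem' := fun hs ht => by simpa [add_smul] using add_mem hs ht
      zero_mem' := by simpa using zero_mem 𝒜
      smul_mem' := fun c s hs => by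
        simpa [smul_eq_mul, mul_smul] using 𝒜.smul_mem hs c }
  by_cases hI : I = ⊤
  · have h1 : (1 : 𝓞 E) ∈ I := by rw [hI]; exact Submodule.mem_top
    have h2 : (1 : 𝓞 E) • a ∈ 𝒜 := h1
    rwa [one_smul] at h2
  · obtain ⟨𝔪, h𝔪max, hI𝔪⟩ := Ideal.exists_le_maximal I hI
    have h𝔪bot : 𝔪 ≠ ⊥ :=
      Ring.ne_bot_of_isMaximal_of_not_isField h𝔪max (NumberField.RingOfIntegers.not_isField E)
    obtain ⟨s, hs𝔪, hsa⟩ := h 𝔪 h𝔪max.isPrime h𝔪bot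
    exact absurd (hI𝔪 hsa) hs𝔪

end Helpers3
section Helpers4

variable {E : Type*} [Field E] [NumberField E]
variable {A : Type*} [Ring A] [Algebra E A]

/-- In a finite-dimensional algebra, a right inverse is a two-sided inverse. -/
lemma fd_mul_eq_one_comm [FiniteDimensional E A] {a b : A} (h : a * b = 1) :
    b * a = 1 := by
  have hl : LinearMap.mulLeft E a * LinearMap.mulLeft E b = 1 := by
    ext x
    show a * (b * x) = x
    rw [← mul_assoc, h, one_mul]
  have hr : LinearMap.mulLeft E b * LinearMap.mulLeft E a = 1 :=
    mul_eq_one_comm.mp hl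
  have := congrArg (fun f : A →ₗ[E] A => f 1) hr
  simpa [Module.End.mul_apply, LinearMap.mulLeft_apply] using this

/-- Entries of powers of a matrix with entries in a subalgebra stay there. -/
lemma pow_entries_mem {ℳ : Subalgebra (𝓞 E) A} {d : ℕ} {P : Matrix (Fin d) (Fin d) A}
    (hP : ∀ i j, P i j ∈ ℳ) (k : ℕ) : ∀ i j, (P ^ k) i j ∈ ℳ := by
  induction k with
  | zero =>
    intro i j
    rw [pow_zero, Matrix.one_apply]
    split
    · exact one_mem ℳ
    · exact zero_mem ℳ
  | succ k ih =>
    intro i j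
    rw [pow_succ, Matrix.mul_apply]
    exact sum_mem fun l _ => mul_mem (ih i l) (hP l j)

set_option synthInstance.maxHeartbeats 1000000 in
/-- Pigeonhole: two powers of a matrix over `ℳ` agree modulo `r`. -/
lemma exists_pow_congr {ℳ : Subalgebra (𝓞 E) A} (hM : (Subalgebra.toSubmodule ℳ).FG)
    {r : 𝓞 E} (hr : r ≠ 0) {d : ℕ} {P : Matrix (Fin d) (Fin d) A}
    (hP : ∀ i j, P i j ∈ ℳ) :
    ∃ a b : ℕ, a < b ∧ ∃ B : Matrix (Fin d) (Fin d) A, (∀ i j, B i j ∈ ℳ) ∧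
      ∀ i j, (P ^ b) i j - (P ^ a) i j = r • B i j := by
  classical
  set W := ↥(Subalgebra.toSubmodule ℳ)
  haveI : Module.Finite (𝓞 E) W := Module.Finite.iff_fg.mpr hM
  set I : Ideal (𝓞 E) := Ideal.span {r} with hI
  haveI : Finite ((𝓞 E) ⧸ I) := by
    have : I ≠ ⊥ := by
      simpa [hI, Ideal.span_singleton_eq_bot] using hr
    exact Ideal.finiteQuotientOfFreeOfNeBot I this
  haveI : Module.Finite ((𝓞 E) ⧸ I) (W ⧸ (I • ⊤ : Submodule (𝓞 E) W)) :=
    Module.Finite.of_restrictScalars_finite (𝓞 E) _ _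
  haveI : Finite (W ⧸ (I • ⊤ : Submodule (𝓞 E) W)) :=
    Module.finite_of_finite ((𝓞 E) ⧸ I)
  let f : ℕ → Fin d → Fin d → (W ⧸ (I • ⊤ : Submodule (𝓞 E) W)) := fun k i j =>
    Submodule.Quotient.mk ⟨(P ^ k) i j, pow_entries_mem hP k i j⟩
  obtain ⟨a, b, hab, hfab⟩ := Finite.exists_ne_map_eq_of_infinite f
  -- wlog a < b
  rcases hab.lt_or_gt with h | h
  case _ =>
    refine ⟨a, b, h, ?_⟩
    have : ∀ i j, ∃ m : W, (P ^ b) i j - (P ^ a) i j = r • (m : A) := by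
      intro i j
      have he : (Submodule.Quotient.mk (p := (I • ⊤ : Submodule (𝓞 E) W))
          ⟨(P ^ b) i j, pow_entries_mem hP b i j⟩ : W ⧸ _) =
          Submodule.Quotient.mk ⟨(P ^ a) i j, pow_entries_mem hP a i j⟩ := by
        have := congrFun (congrFun hfab i) j
        exact this.symm
      rw [Submodule.Quotient.eq] at he
      rw [hI, Submodule.ideal_span_singleton_smul] at he
      rw [← SetLike.mem_coe, Submodule.coe_pointwise_smul] at he
      obtain ⟨m, -, hm⟩ := Set.mem_smul_set.mp he
      refine ⟨m, ?_⟩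
      have h2 := congrArg (Subtype.val) hm
      exact h2.symm
    choose m hm using fun i j => this i j
    exact ⟨Matrix.of (fun i j => ((m i j : W) : A)),
      fun i j => (m i j).2, fun i j => hm i j⟩
  case _ =>
    refine ⟨b, a, h, ?_⟩
    have : ∀ i j, ∃ m : W, (P ^ a) i j - (P ^ b) i j = r • (m : A) := by
      intro i j
      have he : (Submodule.Quotient.mk (p := (I • ⊤ : Submodule (𝓞 E) W))
          ⟨(P ^ a) i j, pow_entries_mem hP a i j⟩ : W ⧸ _) =
          Submodule.Quotient.mk ⟨(P ^ b) i j, pow_entries_mem hP b i j⟩ := by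
        have := congrFun (congrFun hfab i) j
        exact this
      rw [Submodule.Quotient.eq] at he
      rw [hI, Submodule.ideal_span_singleton_smul] at he
      rw [← SetLike.mem_coe, Submodule.coe_pointwise_smul] at he
      obtain ⟨m, -, hm⟩ := Set.mem_smul_set.mp he
      refine ⟨m, ?_⟩
      have h2 := congrArg (Subtype.val) hm
      exact h2.symm
    choose m hm using fun i j => this i j
    exact ⟨Matrix.of (fun i j => ((m i j : W) : A)),
      fun i j => (m i j).2, fun i j => hm i j⟩

end Helpers4
section Helpers5

variable {E : Type*} [Field E] [NumberField E]
variable {A : Type*} [Ring A] [Algebra E A]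
variable {V : Type*} [AddCommGroup V] [Module E V] [Module A V] [IsScalarTower E A V]

lemma sum_smul_sum {n m : ℕ} (a : Fin n → A) (b : Fin n → Fin m → A) (v : Fin m → V) :
    ∑ i, a i • (∑ j, b i j • v j) = ∑ j, (∑ i, a i * b i j) • v j := by
  simp only [Finset.smul_sum, Finset.sum_smul, mul_smul]
  exact Finset.sum_comm

lemma smul_sum_smul (s : 𝓞 E) {n : ℕ} (lam : Fin n → A) (v : Fin n → V) :
    s • (∑ i, lam i • v i) = ∑ i, (s • lam i) • v i := by
  rw [Finset.smul_sum]
  exact Finset.sum_congr rfl fun i _ => (smul_smul_V s (lam i) (v i)).symm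

lemma myPow_mul_pow_eq_one {R : Type*} [Monoid R] {M N : R} (h1 : N * M = 1) :
    ∀ k : ℕ, N ^ k * M ^ k = 1 := by
  intro k
  induction k with
  | zero => simp
  | succ k ih => rw [pow_succ, pow_succ', mul_assoc, ← mul_assoc N M, h1, one_mul, ih]

variable {𝔭 : Ideal (𝓞 E)} (hp : 𝔭.IsPrime) {S : Subalgebra (𝓞 E) A}
include hp

lemma mat_mul_entries_loc {d : ℕ} {P Q : Matrix (Fin d) (Fin d) A}
    (hP : ∀ i j, P i j ∈ localizeA 𝔭 (S : Set A))
    (hQ : ∀ i j, Q i j ∈ localizeA 𝔭 (S : Set A)) :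
    ∀ i j, (P * Q) i j ∈ localizeA 𝔭 (S : Set A) := by
  intro i j
  rw [Matrix.mul_apply]
  exact localizeA_sum hp _ _ fun l _ => localizeA_mul hp (hP i l) (hQ l j)

lemma mat_pow_entries_loc {d : ℕ} {P : Matrix (Fin d) (Fin d) A}
    (hP : ∀ i j, P i j ∈ localizeA 𝔭 (S : Set A)) (k : ℕ) :
    ∀ i j, (P ^ k) i j ∈ localizeA 𝔭 (S : Set A) := by
  induction k with
  | zero =>
    intro i j
    rw [pow_zero, Matrix.one_apply]
    split
    · exact localizeA_one hp
    · exact localizeA_zero hp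
  | succ k ih =>
    intro i j
    rw [pow_succ]
    exact mat_mul_entries_loc hp ih hP i j

/-- Linear independence persists after localization. -/
lemma alpha_indep_loc {ℳ : Subalgebra (𝓞 E) A} {d : ℕ}
    {α : Fin d → V}
    (hind : ∀ lam : Fin d → A, (∀ i, lam i ∈ ℳ) → ∑ i, lam i • α i = 0 → ∀ i, lam i = 0)
    (lam : Fin d → A) (hlam : ∀ i, lam i ∈ localizeA 𝔭 (ℳ : Set A))
    (hsum : ∑ i, lam i • α i = 0) : ∀ i, lam i = 0 := by
  obtain ⟨s, hs, hsl⟩ := tuple_denom_A hp hlam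
  have hs0 : s ≠ 0 := fun h => hs (h ▸ 𝔭.zero_mem)
  have h0 : ∑ i, (s • lam i) • α i = 0 := by
    rw [← smul_sum_smul, hsum, smul_zero]
  intro i
  exact oe_eq_zero_cancel hs0 (hind _ hsl h0 i)

/-- Spanning persists after localization. -/
lemma alpha_span_loc {ℳ : Subalgebra (𝓞 E) A} {Y : Set V} {d : ℕ}
    {α : Fin d → V}
    (hspan : ∀ y ∈ Y,
      ∃ lam : Fin d → A, (∀ i, lam i ∈ ℳ) ∧ y = ∑ i, lam i • α i)
    {y : V} (hy : y ∈ localizeV 𝔭 Y) :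
    ∃ c : Fin d → A, (∀ i, c i ∈ localizeA 𝔭 (ℳ : Set A)) ∧ y = ∑ i, c i • α i := by
  obtain ⟨t, ht, hty⟩ := hy
  have ht0 : t ≠ 0 := fun h => ht (h ▸ 𝔭.zero_mem)
  obtain ⟨μ, hμ, hμy⟩ := hspan _ hty
  set e : E := algebraMap (𝓞 E) E t with he
  have he0 : e ≠ 0 := by
    exact (map_ne_zero_iff _ (@IsFractionRing.injective (𝓞 E) _ E _
      (NumberField.RingOfIntegers.instAlgebra_1 E) _)).mpr ht0
  refine ⟨fun i => algebraMap E A e⁻¹ * μ i, fun i => ⟨t, ht, ?_⟩, ?_⟩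
  · have : t • (algebraMap E A e⁻¹ * μ i) = μ i := by
      rw [oeA_smul_def, ← mul_assoc, oeA_algebraMap_eq, ← he, ← map_mul,
        mul_inv_cancel₀ he0, map_one, one_mul]
    rw [this]; exact hμ i
  · have : y = e⁻¹ • (t • y) := by
      rw [oeV_smul_def, ← he, ← mul_smul, inv_mul_cancel₀ he0, one_smul]
    rw [this, hμy, Finset.smul_sum]
    refine Finset.sum_congr rfl fun i _ => ?_
    rw [mul_smul, algebraMap_smul]

end Helpers5
section Helpers6

variable {E : Type*} [Field E] [NumberField E]
variable {A : Type*} [Ring A] [Algebra E A]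
variable {V : Type*} [AddCommGroup V] [Module E V] [Module A V] [IsScalarTower E A V]

lemma mem_spanSet_self {ℳ : Subalgebra (𝓞 E) A} {Y : Set V} {v : V} (hv : v ∈ Y) :
    v ∈ spanSet (ℳ : Set A) Y :=
  ⟨1, fun _ => 1, fun _ => v, fun _ => one_mem ℳ, fun _ => hv, by simp⟩

/-- **Core local argument**: the coefficients of an element of `X` with respect to an
`ℳ`-basis of `ℳX` lie in the localized order `𝒜_𝔭`. -/
lemma local_coeff [FiniteDimensional E A]
    {𝒜 ℳ : Subalgebra (𝓞 E) A} (h𝒜 : IsOrder 𝒜) (hMFG : (Subalgebra.toSubmodule ℳ).FG)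
    (h𝒜ℳ : 𝒜 ≤ ℳ) {X : Submodule (𝓞 E) V} {d : ℕ} {α : Fin d → V}
    (hαX : ∀ i, α i ∈ X)
    (hbasis : IsBasisOf (ℳ : Set A) (spanSet (ℳ : Set A) (X : Set V)) α)
    {𝔭 : Ideal (𝓞 E)} (hp : 𝔭.IsPrime)
    (hfree : IsFreeOfRank (localizeA 𝔭 (𝒜 : Set A)) (localizeV 𝔭 (X : Set V)) d)
    {lam : Fin d → A} (hlam : ∀ i, lam i ∈ ℳ)
    {x : V} (hx : x ∈ X) (hxe : x = ∑ i, lam i • α i) :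
    ∀ i, lam i ∈ localizeA 𝔭 (𝒜 : Set A) := by
  classical
  obtain ⟨β, hβX, hβmem, hβspan, hβind⟩ := hfree
  have hXsub : (X : Set V) ⊆ spanSet (ℳ : Set A) (X : Set V) :=
    fun v hv => mem_spanSet_self hv
  -- the change of basis matrices
  have hMchoice : ∀ i, ∃ c : Fin d → A,
      (∀ j, c j ∈ localizeA 𝔭 (𝒜 : Set A)) ∧ α i = ∑ j, c j • β j :=
    fun i => hβspan (α i) (mem_localizeV_self hp (hαX i))
  choose M hM1 hM2 using hMchoice
  have hNchoice : ∀ i, ∃ c : Fin d → A,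
      (∀ j, c j ∈ localizeA 𝔭 (ℳ : Set A)) ∧ β i = ∑ j, c j • α j :=
    fun i => alpha_span_loc hp hbasis.2.1 (localizeV_mono hXsub (hβX i))
  choose N hN1 hN2 using hNchoice
  set Mm : Matrix (Fin d) (Fin d) A := Matrix.of M with hMm
  set Nm : Matrix (Fin d) (Fin d) A := Matrix.of N with hNm
  have hMment : ∀ i j, Mm i j ∈ localizeA 𝔭 (𝒜 : Set A) := hM1
  have hNment : ∀ i j, Nm i j ∈ localizeA 𝔭 (ℳ : Set A) := hN1
  -- M * N = 1
  have hMN : Mm * Nm = 1 := by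
    ext i k
    have h0 : ∑ k, ((∑ j, M i j * N j k) - (1 : Matrix (Fin d) (Fin d) A) i k) • α k
        = 0 := by
      simp only [sub_smul, Finset.sum_sub_distrib]
      have e1 : ∑ k, (∑ j, M i j * N j k) • α k = α i := by
        rw [← sum_smul_sum (fun j => M i j) N α]
        rw [← Finset.sum_congr rfl (fun j (_ : j ∈ Finset.univ) => by rw [← hN2 j])]
        exact (hM2 i).symm
      have e2 : ∑ k, (1 : Matrix (Fin d) (Fin d) A) i k • α k = α i := by
        simp [Matrix.one_apply, ite_smul]
      rw [e1, e2, sub_self]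
    have hcoef : ∀ k, (∑ j, M i j * N j k) - (1 : Matrix (Fin d) (Fin d) A) i k
        ∈ localizeA 𝔭 (ℳ : Set A) := by
      intro k
      refine localizeA_sub hp (localizeA_sum hp _ _ fun j _ =>
        localizeA_mul hp (localizeA_mono h𝒜ℳ (hM1 i j)) (hN1 j k)) ?_
      rw [Matrix.one_apply]
      split
      · exact localizeA_one hp
      · exact localizeA_zero hp
    have := alpha_indep_loc hp hbasis.2.2 _ hcoef h0 k
    rw [Matrix.mul_apply]
    exact sub_eq_zero.mp this
  have hNM : Nm * Mm = 1 := fd_mul_eq_one_comm (E := E) hMN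
  -- conductor and denominator
  obtain ⟨r, hr0, hr⟩ := exists_conductor h𝒜 hMFG
  obtain ⟨u, hu, huM⟩ := tuple_denom_A hp
    (lam := fun p : Fin d × Fin d => M p.1 p.2) (fun p => hM1 p.1 p.2)
  set P : Matrix (Fin d) (Fin d) A := u • Mm with hP
  have hPent : ∀ i j, P i j ∈ ℳ := by
    intro i j
    have : P i j = u • M i j := rfl
    rw [this]
    exact h𝒜ℳ (huM (i, j))
  obtain ⟨a, b, hab, B, hB, hBeq⟩ := exists_pow_congr hMFG hr0 hPent
  set e := b - a with he
  have heb : b = a + e := by omega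
  have he1 : e - 1 + 1 = e := by omega
  have hDmat : P ^ b - P ^ a = r • B := by
    ext i j
    simp only [Matrix.sub_apply, Matrix.smul_apply]
    exact hBeq i j
  have hPow : ∀ k : ℕ, P ^ k = (u ^ k) • Mm ^ k := fun k => smul_pow u Mm k
  -- the key identity
  have hNaPa : Nm ^ a * P ^ a = (u ^ a) • (1 : Matrix (Fin d) (Fin d) A) := by
    rw [hPow, mul_smul_comm, myPow_mul_pow_eq_one hNM a]
  have hMeN : Mm ^ e * Nm = Mm ^ (e - 1) := by
    rw [← he1, pow_succ, mul_assoc, hMN, mul_one, he1]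
  have hPeN : (P ^ e - 1) * Nm = (u ^ e) • Mm ^ (e - 1) - Nm := by
    rw [sub_mul, one_mul, hPow, smul_mul_assoc, hMeN]
  have hsplit : P ^ b - P ^ a = P ^ a * (P ^ e - 1) := by
    rw [mul_sub, mul_one, ← pow_add, ← heb]
  have hkey : (u ^ a) • ((u ^ e) • Mm ^ (e - 1) - Nm) = r • (Nm ^ a * B * Nm) := by
    have h1 : Nm ^ a * (P ^ b - P ^ a) * Nm = r • (Nm ^ a * B * Nm) := by
      rw [hDmat, mul_smul_comm, smul_mul_assoc]
    rw [← h1, hsplit, ← mul_assoc, hNaPa, smul_mul_assoc, one_mul, smul_mul_assoc, hPeN]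
  -- entries of N lie in the localized order
  have hNloc : ∀ i j, Nm i j ∈ localizeA 𝔭 (𝒜 : Set A) := by
    intro i j
    have hRHS : (Nm ^ a * B * Nm) i j ∈ localizeA 𝔭 (ℳ : Set A) :=
      mat_mul_entries_loc hp
        (mat_mul_entries_loc hp (mat_pow_entries_loc hp hNment a)
          (fun i j => mem_localizeA_self hp (hB i j))) hNment i j
    have hrs : r • ((Nm ^ a * B * Nm) i j) ∈ localizeA 𝔭 (𝒜 : Set A) := by
      obtain ⟨s, hs, hsz⟩ := hRHS
      exact ⟨s, hs, by rw [smul_comm]; exact hr _ hsz⟩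
    have hent : (u ^ a) • (((u ^ e) • Mm ^ (e - 1) - Nm) i j)
        = r • ((Nm ^ a * B * Nm) i j) := by
      have := congrFun (congrFun hkey i) j
      simpa only [Matrix.smul_apply] using this
    have hsub : ((u ^ e) • Mm ^ (e - 1) - Nm) i j ∈ localizeA 𝔭 (𝒜 : Set A) := by
      refine localizeA_absorb hp (u := u ^ a) (fun hmem => hu (hp.mem_of_pow_mem _ hmem)) ?_
      rw [hent]; exact hrs
    have hMe : ((u ^ e) • Mm ^ (e - 1)) i j ∈ localizeA 𝔭 (𝒜 : Set A) := by
      rw [Matrix.smul_apply]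
      exact localizeA_smul hp (u ^ e) (mat_pow_entries_loc hp hMment (e - 1) i j)
    have : Nm i j = ((u ^ e) • Mm ^ (e - 1)) i j
        - (((u ^ e) • Mm ^ (e - 1) - Nm) i j) := by
      simp [Matrix.sub_apply]
    rw [this]
    exact localizeA_sub hp hMe hsub
  -- express x in terms of the β-expansion and match coefficients
  obtain ⟨c, hc, hcx⟩ := hβspan x (mem_localizeV_self hp hx)
  have hx2 : x = ∑ j, (∑ i, c i * N i j) • α j := by
    rw [hcx, Finset.sum_congr rfl (fun i (_ : i ∈ Finset.univ) => by rw [hN2 i]),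
      sum_smul_sum c N α]
  have hdiff : ∀ j, lam j - (∑ i, c i * N i j) ∈ localizeA 𝔭 (ℳ : Set A) := by
    intro j
    refine localizeA_sub hp (mem_localizeA_self hp (hlam j))
      (localizeA_sum hp _ _ fun i _ =>
        localizeA_mul hp (localizeA_mono h𝒜ℳ (hc i)) (hN1 i j))
  have h0 : ∑ j, (lam j - ∑ i, c i * N i j) • α j = 0 := by
    simp only [sub_smul, Finset.sum_sub_distrib, ← hxe, ← hx2, sub_self]
  have heq : ∀ j, lam j = ∑ i, c i * N i j :=
    fun j => sub_eq_zero.mp (alpha_indep_loc hp hbasis.2.2 _ hdiff h0 j)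
  intro j
  rw [heq j]
  exact localizeA_sum hp _ _ fun i _ => localizeA_mul hp (hc i) (hNloc i j)

end Helpers6
section Helpers7

variable {E : Type*} [Field E] [NumberField E]
variable {A : Type*} [Ring A] [Algebra E A]
variable {V : Type*} [AddCommGroup V] [Module E V] [Module A V] [IsScalarTower E A V]

/-- The hard direction: a global `ℳ`-basis of `ℳX` consisting of elements of a locally
free lattice `X` is an `𝒜`-basis of `X`. -/
lemma basis_of_local [FiniteDimensional E A]
    {𝒜 ℳ : Subalgebra (𝓞 E) A} (h𝒜 : IsOrder 𝒜) (hMFG : (Subalgebra.toSubmodule ℳ).FG)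
    (h𝒜ℳ : 𝒜 ≤ ℳ) {X : Submodule (𝓞 E) V} (hX : IsALattice 𝒜 X) {d : ℕ}
    {α : Fin d → V} (hαX : ∀ i, α i ∈ X)
    (hloc : IsLocallyFreeOfRank (E := E) (𝒜 : Set A) (X : Set V) d)
    (hαbasis : IsBasisOf (ℳ : Set A) (spanSet (ℳ : Set A) (X : Set V)) α) :
    IsBasisOf (𝒜 : Set A) (X : Set V) α := by
  refine ⟨?_, ?_, ?_⟩
  · intro lam hlam
    exact Submodule.sum_mem X fun i _ => hX.2.2 _ (hlam i) _ (hαX i)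
  · intro y hy
    obtain ⟨lam, hlam, hye⟩ := hαbasis.2.1 y (mem_spanSet_self hy)
    refine ⟨lam, fun i => ?_, hye⟩
    exact mem_of_mem_all_localizations fun 𝔭 hp hp0 =>
      local_coeff h𝒜 hMFG h𝒜ℳ hαX hαbasis hp (hloc 𝔭 hp hp0) hlam hy hye i
  · intro lam hlam hsum
    exact hαbasis.2.2 lam (fun i => h𝒜ℳ (hlam i)) hsum

end Helpers7
/-- **Proposition 2.1.** Let `A` be a finite-dimensional semisimple `E`-algebra, `𝒜 ⊆ ℳ`
`𝓞 E`-orders with `ℳ` maximal, and `X` an `𝒜`-lattice.  Then `X` is free of rank `d` over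
`𝒜` iff (a) `X` is locally free of rank `d` over `𝒜` and (b) there are `α₁, …, α_d ∈ X`
with `ℳX = ℳα₁ ⊕ ⋯ ⊕ ℳα_d`; moreover in that case `X = 𝒜α₁ ⊕ ⋯ ⊕ 𝒜α_d`. -/
theorem freeness_criterion [FiniteDimensional E A] [IsSemisimpleRing A]
    (𝒜 ℳ : Subalgebra (𝓞 E) A) (h𝒜 : IsOrder 𝒜) (hℳ : IsMaximalOrder ℳ) (h𝒜ℳ : 𝒜 ≤ ℳ)
    (X : Submodule (𝓞 E) V) (hX : IsALattice 𝒜 X) (d : ℕ) :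
    (IsFreeOfRank (𝒜 : Set A) (X : Set V) d ↔
      IsLocallyFreeOfRank (E := E) (𝒜 : Set A) (X : Set V) d ∧
        ∃ α : Fin d → V, (∀ i, α i ∈ X) ∧
          IsBasisOf (ℳ : Set A) (spanSet (ℳ : Set A) (X : Set V)) α) ∧
    (∀ α : Fin d → V, (∀ i, α i ∈ X) →
      IsLocallyFreeOfRank (E := E) (𝒜 : Set A) (X : Set V) d →
      IsBasisOf (ℳ : Set A) (spanSet (ℳ : Set A) (X : Set V)) α →
      IsBasisOf (𝒜 : Set A) (X : Set V) α) := by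
  classical
  constructor
  · constructor
    · rintro ⟨γ, hγX, hγmem, hγspan, hγind⟩
      obtain ⟨r, hr0, hr⟩ := exists_conductor h𝒜 hℳ.1.1
      constructor
      · -- (a) locally free
        intro 𝔭 hp hp0
        refine ⟨γ, fun i => mem_localizeV_self hp (hγX i), ?_, ?_, ?_⟩
        · intro lam hlam
          obtain ⟨s, hs, hsl⟩ := tuple_denom_A hp hlam
          exact ⟨s, hs, by rw [smul_sum_smul]; exact hγmem _ hsl⟩
        · intro y hy
          exact alpha_span_loc hp hγspan hy
        · exact alpha_indep_loc hp hγind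
      · -- (b) the same family is an `ℳ`-basis of `ℳX`
        refine ⟨γ, hγX, ?_, ?_, ?_⟩
        · intro lam hlam
          exact ⟨d, lam, γ, hlam, hγX, rfl⟩
        · intro y hy
          obtain ⟨m, μ, xs, hμ, hxs, hy'⟩ := hy
          have hxse : ∀ j : Fin m, ∃ c : Fin d → A,
              (∀ i, c i ∈ 𝒜) ∧ xs j = ∑ i, c i • γ i := fun j => hγspan _ (hxs j)
          choose c hc1 hc2 using hxse
          refine ⟨fun i => ∑ j, μ j * c j i, fun i =>
            sum_mem fun j _ => mul_mem (hμ j) (h𝒜ℳ (hc1 j i)), ?_⟩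
          rw [hy', Finset.sum_congr rfl (fun j (_ : j ∈ Finset.univ) => by rw [hc2 j]),
            sum_smul_sum μ c γ]
        · intro lam hlam hsum i
          have h0 : ∑ i, (r • lam i) • γ i = 0 := by
            rw [← smul_sum_smul, hsum, smul_zero]
          exact oe_eq_zero_cancel hr0 (hγind _ (fun i => hr _ (hlam i)) h0 i)
    · rintro ⟨hloc, α, hαX, hαbasis⟩
      exact ⟨α, hαX, basis_of_local h𝒜 hℳ.1.1 h𝒜ℳ hX hαX hloc hαbasis⟩
  · intro α hαX hloc hαbasis
    exact basis_of_local h𝒜 hℳ.1.1 h𝒜ℳ hX hαX hloc hαbasis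

end
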